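/- Let μ ∈ M(𝕋^d) and let Λ ⊂ ℤ^d be a finite subset. Suppose there exists φ ∈ U with |φ(x)| = 1 for all x ∈ 𝕋^d and ⟨φ,μ⟩ = ε(μ,Λ). Then Γ(μ,Λ) ≠ ∅ and ε(μ,Λ) = ‖μ̂‖_{ℓ∞(Λ)} = sup_{m∈Λ} |μ̂(m)|. -/

import Mathlib

/- Setting: `M(𝕋^d)`, the space of complex bounded Radon measures on the `d`-dimensional
torus, is identified with the continuous dual of `C(𝕋^d, ℂ)` via the Riesz representation
theorem; the total variation norm corresponds to the operator norm. -/

open MeasureTheory Complex Real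

noncomputable section

attribute [local instance] ZeroLEOneClass.factZeroLtOne

/-- The `d`-dimensional torus `𝕋^d = (ℝ/ℤ)^d`. -/
abbrev Torus (d : ℕ) : Type := Fin d → AddCircle (1 : ℝ)

/-- The character `x ↦ e^{2πi m·x}` on the torus, for `m ∈ ℤ^d`. -/
def torusChar {d : ℕ} (m : Fin d → ℤ) : C(Torus d, ℂ) :=
  ⟨fun x => ∏ i, fourier (m i) (x i), by
    refine continuous_finsetProd _ fun i _ => ?_
    exact (map_continuous (fourier (m i))).comp (continuous_apply i)⟩

/-- The space `M(𝕋^d)` of complex bounded Radon measures on the torus, identified (via the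
Riesz representation theorem) with the continuous dual of `C(𝕋^d, ℂ)`; the total variation
norm is the operator norm. -/
abbrev TorusMeasure (d : ℕ) : Type := C(Torus d, ℂ) →L[ℂ] ℂ

/-- The Fourier coefficient `μ̂(m) = ∫_{𝕋^d} e^{-2πi m·x} dμ(x)`. -/
def mFourierCoeff {d : ℕ} (μ : TorusMeasure d) (m : Fin d → ℤ) : ℂ :=
  μ (torusChar (-m))

/-- `ν` is an extrapolation of `μ` from `Λ` if `ν̂ = μ̂` on `Λ`. -/
def IsExtrapolation {d : ℕ} (μ : TorusMeasure d) (Λ : Finset (Fin d → ℤ))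
    (ν : TorusMeasure d) : Prop :=
  ∀ m ∈ Λ, mFourierCoeff ν m = mFourierCoeff μ m

/-- `ε(μ,Λ) = inf {‖σ‖ : σ ∈ M(𝕋^d), σ̂ = μ̂ on Λ}`. -/
def minExtNorm {d : ℕ} (μ : TorusMeasure d) (Λ : Finset (Fin d → ℤ)) : ℝ :=
  sInf ((fun ν => ‖ν‖) '' {ν | IsExtrapolation μ Λ ν})

/-- `ν` is a minimal extrapolation of `μ` from `Λ`, i.e. `ν ∈ 𝓔(μ,Λ)`:
an extrapolation whose total variation norm equals `ε(μ,Λ)`. -/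
def IsMinimalExtrapolation {d : ℕ} (μ : TorusMeasure d) (Λ : Finset (Fin d → ℤ))
    (ν : TorusMeasure d) : Prop :=
  IsExtrapolation μ Λ ν ∧ ‖ν‖ = minExtNorm μ Λ

/-- `Γ(μ,Λ) = {m ∈ Λ : |μ̂(m)| = ε(μ,Λ)}`. -/
def gammaSet {d : ℕ} (μ : TorusMeasure d) (Λ : Finset (Fin d → ℤ)) : Set (Fin d → ℤ) :=
  {m | m ∈ Λ ∧ ‖mFourierCoeff μ m‖ = minExtNorm μ Λ}

/-- The measure `ν` is supported in the set `S`: it annihilates every continuous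
function vanishing on `S` (for closed `S` this says `supp(ν) ⊆ S`). -/
def SupportedIn {d : ℕ} (ν : TorusMeasure d) (S : Set (Torus d)) : Prop :=
  ∀ f : C(Torus d, ℂ), (∀ x ∈ S, f x = 0) → ν f = 0

/-- The pairing `⟨f,μ⟩ = ∫_{𝕋^d} f(x) conj(dμ(x)) = conj (μ (conj f))`. -/
def mPairing {d : ℕ} (f : C(Torus d, ℂ)) (μ : TorusMeasure d) : ℂ :=
  starRingEnd ℂ (μ (star f))

/-- `C(𝕋^d;Λ)`: the subspace of trigonometric polynomials
`f(x) = ∑_{m ∈ Λ} a_m e^{2πi m·x}` with frequencies in `Λ`. -/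
def trigPoly {d : ℕ} (Λ : Finset (Fin d → ℤ)) : Submodule ℂ C(Torus d, ℂ) :=
  Submodule.span ℂ (torusChar '' (Λ : Set (Fin d → ℤ)))

/-- For a continuous `g` with `‖g‖_∞ ≤ 1`, the assertion that `sign(ν) = g`
`ν`-almost everywhere, expressed through the standard equivalent condition
`⟨g,ν⟩ = ‖ν‖` (obtained by integrating the Radon–Nikodym identity
`∫ f d|ν| = ∫ f conj(sign ν) dν` against `f = conj g` and using `|ν|(𝕋^d) = ‖ν‖`). -/
def SignEqAE {d : ℕ} (ν : TorusMeasure d) (g : C(Torus d, ℂ)) : Prop :=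
  mPairing g ν = (‖ν‖ : ℂ)

/-- `ν` is a positive measure: it takes nonnegative real values on nonnegative real-valued
continuous functions. -/
def IsPositiveMeasure {d : ℕ} (ν : TorusMeasure d) : Prop :=
  ∀ f : C(Torus d, ℂ), (∀ x, (f x).im = 0 ∧ 0 ≤ (f x).re) → (ν f).im = 0 ∧ 0 ≤ (ν f).re

/-- The Dirac measure `δ_x`: evaluation at `x`. -/
def diracM {d : ℕ} (x : Torus d) : TorusMeasure d :=
  ContinuousMap.evalCLM (R := ℂ) x

/-- The modulation `M_n ν`, defined by `d(M_n ν)(x) = e^{2πi n·x} dν(x)`. -/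
def modulateM {d : ℕ} (n : Fin d → ℤ) (ν : TorusMeasure d) : TorusMeasure d :=
  ν.comp (ContinuousLinearMap.mul ℂ C(Torus d, ℂ) (torusChar n))

section Prop24Aux

variable {d : ℕ}

lemma norm_torusChar_apply (m : Fin d → ℤ) (x : Torus d) : ‖torusChar m x‖ = 1 := by
  show ‖∏ i, fourier (m i) (x i)‖ = 1
  rw [norm_prod]
  exact Finset.prod_eq_one fun i _ => Circle.norm_coe _

lemma fourier_apply_addCircle_zero (n : ℤ) : fourier n (0 : AddCircle (1:ℝ)) = 1 := by
  rw [fourier_apply, smul_zero]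
  exact fourier_zero' (T := 1)

lemma fourier_apply_add (n : ℤ) (a b : AddCircle (1:ℝ)) :
    fourier n (a + b) = fourier n a * fourier n b := by
  simp_rw [fourier_apply, smul_add, AddCircle.toCircle_add, Circle.coe_mul]

lemma torusChar_apply' (m : Fin d → ℤ) (x : Torus d) :
    torusChar m x = ∏ i, fourier (m i) (x i) := rfl

lemma torusChar_add_freq (m n : Fin d → ℤ) (x : Torus d) :
    torusChar (m + n) x = torusChar m x * torusChar n x := by
  simp only [torusChar_apply', Pi.add_apply, fourier_add, Finset.prod_mul_distrib]

lemma torusChar_neg_freq (m : Fin d → ℤ) (x : Torus d) :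
    torusChar (-m) x = starRingEnd ℂ (torusChar m x) := by
  simp only [torusChar_apply', Pi.neg_apply, fourier_neg, ← map_prod]

lemma torusChar_zero_freq (x : Torus d) : torusChar (0 : Fin d → ℤ) x = 1 := by
  simp [torusChar_apply', fourier_zero]

/-- `torusChar m` as a monoid homomorphism from `Multiplicative (Torus d)` to `ℂ`. -/
def torusCharHom (m : Fin d → ℤ) : Multiplicative (Torus d) →* ℂ where
  toFun x := torusChar m x.toAdd
  map_one' := by
    show torusChar m 0 = 1
    simp [torusChar_apply', fourier_apply_addCircle_zero]
  map_mul' x y := by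
    show torusChar m (x.toAdd + y.toAdd) = _
    simp only [torusChar_apply', Pi.add_apply, fourier_apply_add, Finset.prod_mul_distrib]

lemma fourier_freq_injective {n n' : ℤ}
    (h : ∀ t : AddCircle (1:ℝ), fourier n t = fourier n' t) : n = n' := by
  by_contra hne
  have hN : ((n : ℂ) - n') ≠ 0 := by
    simpa [sub_eq_zero] using fun hc => hne (by exact_mod_cast hc)
  set r : ℝ := (2 * ((n : ℝ) - n'))⁻¹ with hr
  have hNr : ((n : ℝ) - n') ≠ 0 := by
    simpa [sub_eq_zero] using fun hc => hne (by exact_mod_cast hc)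
  have h1 := h (r : AddCircle (1:ℝ))
  rw [fourier_coe_apply, fourier_coe_apply] at h1
  simp only [Complex.ofReal_one, div_one] at h1
  have h2 : Complex.exp (2 * π * Complex.I * n * r - 2 * π * Complex.I * n' * r) = 1 := by
    rw [Complex.exp_sub, h1, div_self (Complex.exp_ne_zero _)]
  have h3 : (2 * π * Complex.I * n * r - 2 * π * Complex.I * n' * r) = π * Complex.I := by
    have hrc : ((n : ℂ) - n') * (r : ℂ) = 1 / 2 := by
      rw [hr]
      push_cast
      field_simp
    have : 2 * (π : ℂ) * Complex.I * (((n : ℂ) - n') * r) = π * Complex.I := by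
      rw [hrc]; ring
    calc 2 * π * Complex.I * n * r - 2 * π * Complex.I * n' * r
        = 2 * (π : ℂ) * Complex.I * (((n : ℂ) - n') * r) := by ring
      _ = π * Complex.I := this
  rw [h3, Complex.exp_pi_mul_I] at h2
  norm_num at h2

lemma torusCharHom_injective : Function.Injective (torusCharHom (d := d)) := by
  intro m m' h
  funext i
  refine fourier_freq_injective (n := m i) (n' := m' i) fun t => ?_
  have h1 := DFunLike.congr_fun h (Multiplicative.ofAdd (fun j => if j = i then t else (0 : AddCircle (1:ℝ))))
  have key : ∀ k : Fin d → ℤ,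
      torusChar k (fun j => if j = i then t else (0 : AddCircle (1:ℝ))) = fourier (k i) t := by
    intro k
    rw [torusChar_apply', Finset.prod_eq_single i]
    · simp
    · intro j _ hj; simp [hj, fourier_apply_addCircle_zero]
    · simp
  simpa [torusCharHom, key] using h1

lemma torusChar_linearIndependent :
    LinearIndependent ℂ (fun m : Fin d → ℤ => (torusChar m : Torus d → ℂ)) := by
  have h := (linearIndependent_monoidHom (Multiplicative (Torus d)) ℂ).comp
    torusCharHom torusCharHom_injective
  exact h
/-- The strict lexicographic order on `ℤ^d`. -/
def LexLT (a b : Fin d → ℤ) : Prop :=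
  Pi.Lex (· < ·) (fun x y => x < y) a b

lemma lexLT_irrefl (a : Fin d → ℤ) : ¬ LexLT a a := fun ⟨_, _, hi⟩ => lt_irrefl _ hi

lemma lexLT_trans {a b c : Fin d → ℤ} (h1 : LexLT a b) (h2 : LexLT b c) : LexLT a c :=
  IsTrans.trans (r := fun x y : Lex (Fin d → ℤ) => x < y) a b c h1 h2

lemma lexLT_trichotomy (a b : Fin d → ℤ) : LexLT a b ∨ a = b ∨ LexLT b a :=
  by
    have h : ¬LexLT a b → ¬LexLT b a → a = b :=
      (Pi.isTrichotomous_lex _ _ (wellFounded_lt (α := Fin d))).trichotomous a b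
    tauto

lemma lexLT_add {a b c e : Fin d → ℤ} (h1 : LexLT a b)
    (h2 : LexLT c e ∨ c = e) : LexLT (a + c) (b + e) := by
  obtain ⟨i, hji, hi⟩ := h1
  rcases h2 with h2 | rfl
  · obtain ⟨i', hji', hi'⟩ := h2
    rcases lt_trichotomy i i' with hii | rfl | hii
    · refine ⟨i, fun j hj => ?_, ?_⟩
      · simp only [Pi.add_apply, hji j hj, hji' j (hj.trans hii)]
      · simp only [Pi.add_apply, hji' i hii]
        exact add_lt_add_left hi _
    · exact ⟨i, fun j hj => by simp only [Pi.add_apply, hji j hj, hji' j hj],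
        add_lt_add hi hi'⟩
    · refine ⟨i', fun j hj => ?_, ?_⟩
      · simp only [Pi.add_apply, hji j (hj.trans hii), hji' j hj]
      · simp only [Pi.add_apply, hji i' hii]
        exact add_lt_add_right hi' _
  · exact ⟨i, fun j hj => by simp only [Pi.add_apply, hji j hj], add_lt_add_left hi _⟩

lemma exists_lexLT_max :
    ∀ (S : Finset (Fin d → ℤ)), S.Nonempty → ∃ mM ∈ S, ∀ m ∈ S, m = mM ∨ LexLT m mM := by
  classical
  intro S
  induction S using Finset.induction_on with
  | empty => intro h; simp at h
  | @insert a s ha ih =>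
    intro _
    rcases s.eq_empty_or_nonempty with rfl | hs
    · exact ⟨a, Finset.mem_insert_self a _, by simp⟩
    · obtain ⟨mM, hmM, hmax⟩ := ih hs
      rcases lexLT_trichotomy a mM with h | h | h
      · refine ⟨mM, Finset.mem_insert_of_mem hmM, fun m hm => ?_⟩
        rcases Finset.mem_insert.1 hm with rfl | hm'
        · exact Or.inr h
        · exact hmax m hm'
      · refine ⟨mM, Finset.mem_insert_of_mem hmM, fun m hm => ?_⟩
        rcases Finset.mem_insert.1 hm with rfl | hm'
        · exact Or.inl h
        · exact hmax m hm'
      · refine ⟨a, Finset.mem_insert_self a _, fun m hm => ?_⟩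
        rcases Finset.mem_insert.1 hm with rfl | hm'
        · exact Or.inl rfl
        · rcases hmax m hm' with rfl | hlt
          · exact Or.inr h
          · exact Or.inr (lexLT_trans hlt h)

lemma exists_lexLT_min :
    ∀ (S : Finset (Fin d → ℤ)), S.Nonempty → ∃ mm ∈ S, ∀ m ∈ S, m = mm ∨ LexLT mm m := by
  classical
  intro S
  induction S using Finset.induction_on with
  | empty => intro h; simp at h
  | @insert a s ha ih =>
    intro _
    rcases s.eq_empty_or_nonempty with rfl | hs
    · exact ⟨a, Finset.mem_insert_self a _, by simp⟩
    · obtain ⟨mm, hmm, hmin⟩ := ih hs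
      rcases lexLT_trichotomy a mm with h | h | h
      · refine ⟨a, Finset.mem_insert_self a _, fun m hm => ?_⟩
        rcases Finset.mem_insert.1 hm with rfl | hm'
        · exact Or.inl rfl
        · rcases hmin m hm' with rfl | hlt
          · exact Or.inr h
          · exact Or.inr (lexLT_trans h hlt)
      · refine ⟨mm, Finset.mem_insert_of_mem hmm, fun m hm => ?_⟩
        rcases Finset.mem_insert.1 hm with rfl | hm'
        · exact Or.inl h
        · exact hmin m hm'
      · refine ⟨mm, Finset.mem_insert_of_mem hmm, fun m hm => ?_⟩
        rcases Finset.mem_insert.1 hm with rfl | hm'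
        · exact Or.inr h
        · exact hmin m hm'
lemma torusChar_sub_freq (m m' : Fin d → ℤ) (x : Torus d) :
    torusChar (m - m') x = torusChar m x * starRingEnd ℂ (torusChar m' x) := by
  rw [sub_eq_add_neg, torusChar_add_freq, torusChar_neg_freq]

lemma exists_monomial (Λ : Finset (Fin d → ℤ)) (φ : C(Torus d, ℂ))
    (hφΛ : φ ∈ trigPoly Λ) (hmod : ∀ x, ‖φ x‖ = 1) :
    ∃ m₀ ∈ Λ, ∃ c : ℂ, ‖c‖ = 1 ∧ ∀ x, φ x = c * torusChar m₀ x := by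
  classical
  obtain ⟨l, hsupp, hl⟩ := (Finsupp.mem_span_image_iff_linearCombination ℂ).1 hφΛ
  set S : Finset (Fin d → ℤ) := l.support with hS
  have hφx : ∀ x : Torus d, φ x = ∑ m ∈ S, l m * torusChar m x := by
    intro x
    rw [← hl, Finsupp.linearCombination_apply, Finsupp.sum]
    simp
    rfl
  have hS0 : S.Nonempty := by
    rcases S.eq_empty_or_nonempty with h | h
    · exfalso
      have h1 := hmod 0
      rw [hφx 0, h, Finset.sum_empty] at h1
      simp at h1
    · exact h
  set P := S ×ˢ S with hP
  set g : ((Fin d → ℤ) × (Fin d → ℤ)) → (Fin d → ℤ) := fun p => p.1 - p.2 with hg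
  set D := P.image g with hD
  set A : (Fin d → ℤ) → ℂ := fun k => ∑ p ∈ P with g p = k, l p.1 * starRingEnd ℂ (l p.2)
    with hA
  have hkey : ∀ x : Torus d,
      ∑ p ∈ P, (l p.1 * starRingEnd ℂ (l p.2)) * torusChar (g p) x = 1 := by
    intro x
    have h1 : φ x * starRingEnd ℂ (φ x) = 1 := by
      have h2 := hmod x
      rw [Complex.mul_conj, Complex.normSq_eq_norm_sq, h2]
      norm_num
    calc ∑ p ∈ P, (l p.1 * starRingEnd ℂ (l p.2)) * torusChar (g p) x
        = ∑ m ∈ S, ∑ m' ∈ S, (l m * torusChar m x) * (starRingEnd ℂ (l m') *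
            starRingEnd ℂ (torusChar m' x)) := by
          rw [hP, Finset.sum_product]
          refine Finset.sum_congr rfl fun m _ => Finset.sum_congr rfl fun m' _ => ?_
          rw [hg, torusChar_sub_freq]
          ring
      _ = (∑ m ∈ S, l m * torusChar m x) *
            starRingEnd ℂ (∑ m' ∈ S, l m' * torusChar m' x) := by
          rw [map_sum, Finset.sum_mul_sum]
          refine Finset.sum_congr rfl fun m _ => Finset.sum_congr rfl fun m' _ => ?_
          rw [map_mul]
      _ = φ x * starRingEnd ℂ (φ x) := by rw [← hφx]
      _ = 1 := h1
  have hgroup : ∀ x : Torus d, ∑ k ∈ D, A k * torusChar k x = 1 := by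
    intro x
    rw [← hkey x,
      ← Finset.sum_fiberwise_of_maps_to (fun p hp => Finset.mem_image_of_mem g hp)
        (fun p => (l p.1 * starRingEnd ℂ (l p.2)) * torusChar (g p) x)]
    refine Finset.sum_congr rfl fun k hk => ?_
    simp only [hA]
    rw [Finset.sum_mul]
    refine Finset.sum_congr rfl fun p hp => ?_
    rw [(Finset.mem_filter.1 hp).2]
  have hA0 : ∀ k, k ∉ D → A k = 0 := by
    intro k hk
    have hfe : ({p ∈ P | g p = k} : Finset _) = ∅ :=
      Finset.filter_false_of_mem (fun p hp hgp => hk (hgp ▸ Finset.mem_image_of_mem g hp))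
    show ∑ p ∈ {p ∈ P | g p = k}, l p.1 * starRingEnd ℂ (l p.2) = 0
    rw [hfe, Finset.sum_empty]
  set T := insert (0 : Fin d → ℤ) D with hT
  set c' : (Fin d → ℤ) → ℂ := fun k => A k - (if k = 0 then 1 else 0) with hc'
  have hsum0 : ∑ k ∈ T, c' k • (torusChar k : Torus d → ℂ) = 0 := by
    funext x
    simp only [Finset.sum_apply, Pi.smul_apply, Pi.zero_apply, smul_eq_mul, hc', sub_mul]
    rw [Finset.sum_sub_distrib]
    have e2 : ∑ k ∈ T, A k * torusChar k x = 1 := by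
      rw [← hgroup x]
      exact (Finset.sum_subset (Finset.subset_insert 0 D)
        (fun k _ hk => by rw [hA0 k hk, zero_mul])).symm
    have e3 : ∑ k ∈ T, (if k = 0 then (1:ℂ) else 0) * torusChar k x = 1 := by
      rw [Finset.sum_eq_single_of_mem 0 (Finset.mem_insert_self 0 D)]
      · rw [if_pos rfl, one_mul, torusChar_zero_freq]
      · intro k _ hk
        rw [if_neg hk, zero_mul]
    rw [e2, e3, sub_self]
  have hli := linearIndependent_iff'.1 torusChar_linearIndependent T c' hsum0
  have hcard : ∀ m₁ ∈ S, ∀ m₂ ∈ S, m₁ = m₂ := by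
    intro m₁ hm₁ m₂ hm₂
    by_contra hne
    obtain ⟨mM, hmM, hmax⟩ := exists_lexLT_max S hS0
    obtain ⟨mm, hmm, hmin⟩ := exists_lexLT_min S hS0
    have hMne : mM ≠ mm := by
      intro hEq
      apply hne
      have key : ∀ m ∈ S, m = mM := by
        intro m hm
        rcases hmax m hm with h | h
        · exact h
        · rcases hmin m hm with h' | h'
          · exact h'.trans hEq.symm
          · exact absurd (lexLT_trans h (hEq ▸ h')) (lexLT_irrefl _)
      exact (key m₁ hm₁).trans (key m₂ hm₂).symm
    have hk0 : mM - mm ≠ 0 := sub_ne_zero.2 hMne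
    have hmem : (mM, mm) ∈ P := by rw [hP]; exact Finset.mem_product.2 ⟨hmM, hmm⟩
    have hk0D : mM - mm ∈ D := by rw [hD]; exact Finset.mem_image_of_mem g hmem
    have hck0 := hli (mM - mm) (Finset.mem_insert_of_mem hk0D)
    have hAk0 : A (mM - mm) = 0 := by
      simp only [hc'] at hck0
      simpa [hk0] using hck0
    have hfil : ({p ∈ P | g p = mM - mm} : Finset _) = {(mM, mm)} := by
      refine Finset.eq_singleton_iff_unique_mem.2 ⟨Finset.mem_filter.2 ⟨hmem, rfl⟩, ?_⟩
      rintro ⟨p₁, p₂⟩ hp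
      obtain ⟨hpP, hpg⟩ := Finset.mem_filter.1 hp
      have hp1 : p₁ ∈ S := (Finset.mem_product.1 (hP ▸ hpP)).1
      have hp2 : p₂ ∈ S := (Finset.mem_product.1 (hP ▸ hpP)).2
      have hpg' : p₁ - p₂ = mM - mm := hpg
      have heq : p₁ + mm = mM + p₂ := by
        rw [sub_eq_sub_iff_add_eq_add] at hpg'
        exact hpg'
      have hp1M : p₁ = mM := by
        rcases hmax p₁ hp1 with h | h
        · exact h
        · exfalso
          rcases hmin p₂ hp2 with h' | h'
          · rw [h'] at heq
            exact lexLT_irrefl mM (add_right_cancel heq ▸ h)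
          · have hcon := lexLT_add h (Or.inl h')
            rw [heq] at hcon
            exact lexLT_irrefl _ hcon
      have hp2m : p₂ = mm := by
        rw [hp1M] at heq
        exact (add_left_cancel heq).symm
      rw [hp1M, hp2m]
    have : l mM * starRingEnd ℂ (l mm) = 0 := by
      simp only [hA] at hAk0
      rwa [hfil, Finset.sum_singleton] at hAk0
    rcases mul_eq_zero.1 this with h | h
    · exact Finsupp.mem_support_iff.1 hmM h
    · exact Finsupp.mem_support_iff.1 hmm ((map_eq_zero (starRingEnd ℂ)).1 h)
  obtain ⟨m₀, hm₀⟩ := hS0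
  have hSsing : S = {m₀} :=
    Finset.eq_singleton_iff_unique_mem.2 ⟨hm₀, fun m hm => hcard m hm m₀ hm₀⟩
  have hm₀Λ : m₀ ∈ Λ := (Finsupp.mem_supported ℂ l).1 hsupp hm₀
  refine ⟨m₀, hm₀Λ, l m₀, ?_, ?_⟩
  · have h1 := hmod 0
    rw [hφx 0, hSsing, Finset.sum_singleton, norm_mul, norm_torusChar_apply, mul_one] at h1
    exact h1
  · intro x
    rw [hφx x, hSsing, Finset.sum_singleton]
end Prop24Aux

/-- **Proposition 2.4.** If there exists `φ ∈ U` with `|φ| ≡ 1` and `⟨φ,μ⟩ = ε(μ,Λ)`,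
then `Γ(μ,Λ) ≠ ∅` and `ε(μ,Λ) = ‖μ̂‖_{ℓ∞(Λ)} = sup_{m ∈ Λ} |μ̂(m)|`. -/
theorem gammaSet_nonempty_and_minExtNorm_eq_sup {d : ℕ} (μ : TorusMeasure d)
    (Λ : Finset (Fin d → ℤ)) (φ : C(Torus d, ℂ)) (hφΛ : φ ∈ trigPoly Λ)
    (hφ1 : ‖φ‖ ≤ 1) (hmod : ∀ x, ‖φ x‖ = 1)
    (hφμ : mPairing φ μ = (minExtNorm μ Λ : ℂ)) :
    (gammaSet μ Λ).Nonempty ∧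
    IsGreatest ((fun m => ‖mFourierCoeff μ m‖) '' (Λ : Set (Fin d → ℤ)))
      (minExtNorm μ Λ) := by
  have hchar_norm : ∀ n : Fin d → ℤ, ‖torusChar (d := d) n‖ ≤ 1 := by
    intro n
    rw [ContinuousMap.norm_le _ zero_le_one]
    intro x
    rw [norm_torusChar_apply]
  have hne : ((fun ν => ‖ν‖) '' {ν | IsExtrapolation μ Λ ν}).Nonempty :=
    ⟨‖μ‖, μ, fun m _ => rfl, rfl⟩
  have hub : ∀ m ∈ Λ, ‖mFourierCoeff μ m‖ ≤ minExtNorm μ Λ := by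
    intro m hm
    refine le_csInf hne ?_
    rintro y ⟨ν, hν, rfl⟩
    rw [show mFourierCoeff μ m = mFourierCoeff ν m from (hν m hm).symm]
    calc ‖mFourierCoeff ν m‖ = ‖ν (torusChar (-m))‖ := rfl
      _ ≤ ‖ν‖ * ‖torusChar (-m)‖ := ν.le_opNorm _
      _ ≤ ‖ν‖ * 1 := mul_le_mul_of_nonneg_left (hchar_norm (-m)) (norm_nonneg ν)
      _ = ‖ν‖ := mul_one _
  have hε0 : 0 ≤ minExtNorm μ Λ :=
    Real.sInf_nonneg (by rintro y ⟨ν, _, rfl⟩; exact norm_nonneg ν)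
  obtain ⟨m₀, hm₀Λ, c, hc, hφc⟩ := exists_monomial Λ φ hφΛ hmod
  have hpair : mPairing φ μ = c * starRingEnd ℂ (mFourierCoeff μ m₀) := by
    have hφeq : star φ = starRingEnd ℂ c • torusChar (-m₀) := by
      ext x
      simp only [ContinuousMap.star_apply, ContinuousMap.smul_apply, smul_eq_mul]
      rw [hφc x, torusChar_neg_freq]
      simp [Complex.star_def]
    rw [mPairing, hφeq, _root_.map_smul, smul_eq_mul, map_mul, Complex.conj_conj]
    rfl
  have hkey : ‖mFourierCoeff μ m₀‖ = minExtNorm μ Λ := by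
    have h1 : c * starRingEnd ℂ (mFourierCoeff μ m₀) = (minExtNorm μ Λ : ℂ) := by
      rw [← hpair]; exact hφμ
    have h2 := congrArg norm h1
    rw [norm_mul, hc, one_mul, RCLike.norm_conj, Complex.norm_real,
      Real.norm_of_nonneg hε0] at h2
    exact h2
  exact ⟨⟨m₀, hm₀Λ, hkey⟩, ⟨m₀, hm₀Λ, hkey⟩, by rintro y ⟨m, hm, rfl⟩; exact hub m hm⟩

end
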